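/- Fix ρ, κ ∈ (0,1) with ρ + κ/2 < 1 and κ + ρ/2 < 1, and Υ, Υ' ≥ 1. For each integer S ≥ 1 set R = ⌈S^ρ⌉, C = ⌈S^κ⌉, and let Z_{ij} (1 ≤ i ≤ R, 1 ≤ j ≤ C) be independent Bernoulli random variables with success probabilities p_{ij} ∈ [0,1] satisfying S/(Υ'·RC) ≤ p_{ij} ≤ Υ·S/(RC). Then lim_{S→∞} P( ‖Z‖₂ ≤ (Υ+1)·S/√(RC) ) = 1. -/

import Mathlib

open MeasureTheory ProbabilityTheory Filter Real

/-- The ℓ²→ℓ² operator (spectral) norm of a real matrix. -/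
noncomputable def l2OpNorm {m n : ℕ} (A : Matrix (Fin m) (Fin n) ℝ) : ℝ :=
  ‖LinearMap.toContinuousLinearMap (Matrix.toEuclideanLin A)‖


lemma l2OpNorm_le_sqrt_mul {m n : ℕ} (A : Matrix (Fin m) (Fin n) ℝ)
    (hA : ∀ i j, 0 ≤ A i j) {r c : ℝ} (hr : 0 ≤ r) (hc : 0 ≤ c)
    (hrow : ∀ i, ∑ j, A i j ≤ r) (hcol : ∀ j, ∑ i, A i j ≤ c) :
    l2OpNorm A ≤ Real.sqrt (r * c) := by
  rw [l2OpNorm]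
  apply ContinuousLinearMap.opNorm_le_bound _ (Real.sqrt_nonneg _)
  intro v
  rw [LinearMap.coe_toContinuousLinearMap']
  have hEv : ∀ i, (Matrix.toEuclideanLin A v : EuclideanSpace ℝ (Fin m)) i
      = ∑ j, A i j * v j := by
    intro i
    simp [Matrix.toEuclideanLin_apply, Matrix.mulVec, dotProduct]
  rw [EuclideanSpace.norm_eq, EuclideanSpace.norm_eq]
  simp only [hEv, Real.norm_eq_abs, sq_abs]
  rw [← Real.sqrt_mul (by positivity)]
  apply Real.sqrt_le_sqrt
  have key : ∀ i, (∑ j, A i j * v j) ^ 2 ≤ r * ∑ j, A i j * v j ^ 2 := by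
    intro i
    have h1 : |∑ j, A i j * v j| ≤ ∑ j, A i j * |v j| := by
      refine (Finset.abs_sum_le_sum_abs _ _).trans_eq ?_
      refine Finset.sum_congr rfl fun j _ => ?_
      rw [abs_mul, abs_of_nonneg (hA i j)]
    have h2 : (∑ j, A i j * |v j|) ^ 2 ≤ (∑ j, A i j) * ∑ j, A i j * v j ^ 2 := by
      have := Finset.sum_mul_sq_le_sq_mul_sq Finset.univ
        (fun j => Real.sqrt (A i j)) (fun j => Real.sqrt (A i j) * |v j|)
      calc (∑ j, A i j * |v j|) ^ 2
          = (∑ j, Real.sqrt (A i j) * (Real.sqrt (A i j) * |v j|)) ^ 2 := by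
            congr 1; refine Finset.sum_congr rfl fun j _ => ?_
            rw [← mul_assoc, Real.mul_self_sqrt (hA i j)]
        _ ≤ (∑ j, Real.sqrt (A i j) ^ 2) * ∑ j, (Real.sqrt (A i j) * |v j|) ^ 2 := this
        _ = (∑ j, A i j) * ∑ j, A i j * v j ^ 2 := by
            congr 1
            · exact Finset.sum_congr rfl fun j _ => Real.sq_sqrt (hA i j)
            · refine Finset.sum_congr rfl fun j _ => ?_
              rw [mul_pow, Real.sq_sqrt (hA i j), sq_abs]
    calc (∑ j, A i j * v j) ^ 2 = |∑ j, A i j * v j| ^ 2 := (sq_abs _).symm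
      _ ≤ (∑ j, A i j * |v j|) ^ 2 := by
          apply pow_le_pow_left₀ (abs_nonneg _) h1
      _ ≤ (∑ j, A i j) * ∑ j, A i j * v j ^ 2 := h2
      _ ≤ r * ∑ j, A i j * v j ^ 2 := by
          apply mul_le_mul_of_nonneg_right (hrow i)
          exact Finset.sum_nonneg fun j _ => mul_nonneg (hA i j) (sq_nonneg _)
  calc ∑ i, (∑ j, A i j * v j) ^ 2 ≤ ∑ i, r * ∑ j, A i j * v j ^ 2 :=
        Finset.sum_le_sum fun i _ => key i
    _ = r * ∑ j, (∑ i, A i j) * v j ^ 2 := by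
        rw [← Finset.mul_sum, Finset.sum_comm]
        congr 1; refine Finset.sum_congr rfl fun j _ => ?_
        rw [Finset.sum_mul]
    _ ≤ r * ∑ j, c * v j ^ 2 := by
        apply mul_le_mul_of_nonneg_left _ hr
        exact Finset.sum_le_sum fun j _ =>
          mul_le_mul_of_nonneg_right (hcol j) (sq_nonneg _)
    _ = r * c * ∑ j, v j ^ 2 := by rw [← Finset.mul_sum, mul_assoc]

lemma exp_le_one_add_add_sq {t : ℝ} (h0 : 0 ≤ t) (h1 : t ≤ 1) :
    Real.exp t ≤ 1 + t + t ^ 2 := by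
  have h := Real.exp_bound (x := t) (by rwa [abs_of_nonneg h0]) (n := 2) (by norm_num)
  have hs : ∑ m ∈ Finset.range 2, t ^ m / m.factorial = 1 + t := by
    simp [Finset.sum_range_succ]
  rw [hs, abs_of_nonneg h0] at h
  have h2 := (abs_le.mp h).2
  norm_num [Nat.factorial] at h2
  nlinarith [sq_nonneg t]

lemma bernoulli_sum_tail {Ω : Type*} [MeasurableSpace Ω] (P : Measure Ω)
    [IsProbabilityMeasure P] {ι : Type*} (s : Finset ι) (W : ι → Ω → ℝ)
    (h01 : ∀ q ω, W q ω = 0 ∨ W q ω = 1)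
    (hmeas : ∀ q, Measurable (W q))
    (hindep : iIndepFun W P)
    {μ0 : ℝ} (hμ0 : ∑ q ∈ s, (P {ω | W q ω = 1}).toReal ≤ μ0)
    {t : ℝ} (ht : 0 ≤ t) (b : ℝ) :
    (P {ω | b ≤ ∑ q ∈ s, W q ω}).toReal
      ≤ Real.exp (-t * b + (Real.exp t - 1) * μ0) := by
  classical
  set X : Ω → ℝ := fun ω => ∑ q ∈ s, W q ω with hX
  have hWnn : ∀ q ω, 0 ≤ W q ω := fun q ω => by
    rcases h01 q ω with h | h <;> simp [h]
  have hWle : ∀ q ω, W q ω ≤ 1 := fun q ω => by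
    rcases h01 q ω with h | h <;> simp [h]
  have hXmeas : Measurable X := Finset.measurable_sum s fun q _ => hmeas q
  -- integrability of exp (t * X)
  have hint : Integrable (fun ω => Real.exp (t * X ω)) P := by
    refine Integrable.mono' (integrable_const (Real.exp (t * s.card)))
      ((hXmeas.const_mul t).exp.aestronglyMeasurable) ?_
    refine Filter.Eventually.of_forall fun ω => ?_
    rw [Real.norm_eq_abs, abs_of_nonneg (Real.exp_nonneg _)]
    apply Real.exp_le_exp.mpr
    apply mul_le_mul_of_nonneg_left _ ht
    calc X ω ≤ ∑ q ∈ s, (1 : ℝ) := Finset.sum_le_sum fun q _ => hWle q ω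
      _ = s.card := by simp
  have hch := measure_ge_le_exp_mul_mgf (μ := P) (X := X) b ht hint
  refine hch.trans ?_
  have hsum : mgf X P t = ∏ q ∈ s, mgf (W q) P t := by
    have := hindep.mgf_sum (t := t) hmeas s
    rw [← this]
    congr 1
    funext ω
    simp [hX]
  rw [hsum]
  -- bound each mgf
  have hWint : ∀ q, Integrable (W q) P := by
    intro q
    refine Integrable.mono' (integrable_const (1 : ℝ)) (hmeas q).aestronglyMeasurable ?_
    exact Filter.Eventually.of_forall fun ω => by
      rw [Real.norm_eq_abs, abs_of_nonneg (hWnn q ω)]; exact hWle q ω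
  have hmgf : ∀ q ∈ s, mgf (W q) P t
      = 1 + (Real.exp t - 1) * (P {ω | W q ω = 1}).toReal := by
    intro q _
    have hind : ∀ ω, Real.exp (t * W q ω) = 1 + (Real.exp t - 1) * W q ω := by
      intro ω
      rcases h01 q ω with h | h <;> simp [h]
    have hset : (fun ω => W q ω) = Set.indicator {ω | W q ω = 1} (fun _ => (1:ℝ)) := by
      funext ω
      rcases h01 q ω with h | h
      · rw [h, Set.indicator_apply]
        simp only [Set.mem_setOf_eq, h]
        norm_num
      · rw [h, Set.indicator_apply]
        simp [h]
    have hWmean : ∫ ω, W q ω ∂P = (P {ω | W q ω = 1}).toReal := by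
      rw [hset, integral_indicator_const]
      · simp [Measure.real]
      · exact (hmeas q) (measurableSet_singleton 1)
    rw [mgf]
    simp only [hind]
    rw [integral_add (integrable_const 1) ((hWint q).const_mul _), integral_const,
      integral_const_mul, hWmean]
    simp
  calc Real.exp (-t * b) * ∏ q ∈ s, mgf (W q) P t
      ≤ Real.exp (-t * b) * ∏ q ∈ s,
          Real.exp ((Real.exp t - 1) * (P {ω | W q ω = 1}).toReal) := by
        apply mul_le_mul_of_nonneg_left _ (Real.exp_nonneg _)
        apply Finset.prod_le_prod
        · intro q hq
          rw [hmgf q hq]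
          have : 0 ≤ (Real.exp t - 1) * (P {ω | W q ω = 1}).toReal :=
            mul_nonneg (by linarith [Real.one_le_exp ht]) ENNReal.toReal_nonneg
          linarith
        · intro q hq
          rw [hmgf q hq, add_comm]
          exact Real.add_one_le_exp _
    _ = Real.exp (-t * b + (Real.exp t - 1) * ∑ q ∈ s, (P {ω | W q ω = 1}).toReal) := by
        rw [← Real.exp_sum, ← Real.exp_add, Finset.mul_sum]
    _ ≤ Real.exp (-t * b + (Real.exp t - 1) * μ0) := by
        apply Real.exp_le_exp.mpr
        have h1 : (0:ℝ) ≤ Real.exp t - 1 := by linarith [Real.one_le_exp ht]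
        nlinarith [mul_le_mul_of_nonneg_left hμ0 h1]

lemma tendsto_self_mul_exp_neg_rpow {c a : ℝ} (hc : 0 < c) (ha : 0 < a) :
    Tendsto (fun x : ℝ => x * Real.exp (-(c * x ^ a))) atTop (nhds 0) := by
  obtain ⟨n, hn⟩ : ∃ n : ℕ, 1 ≤ a * n := by
    obtain ⟨n, hn⟩ := exists_nat_ge (1 / a)
    refine ⟨n, ?_⟩
    rw [div_le_iff₀ ha] at hn
    linarith [mul_comm a (n:ℝ)]
  have hh : Tendsto (fun x : ℝ => c * x ^ a) atTop atTop :=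
    (tendsto_rpow_atTop ha).const_mul_atTop hc
  have hg : Tendsto (fun x : ℝ => (c * x ^ a) ^ n * Real.exp (-(c * x ^ a)))
      atTop (nhds 0) := (tendsto_pow_mul_exp_neg_atTop_nhds_zero n).comp hh
  have hg' : Tendsto (fun x : ℝ => c⁻¹ ^ n * ((c * x ^ a) ^ n * Real.exp (-(c * x ^ a))))
      atTop (nhds 0) := by
    simpa using hg.const_mul (c⁻¹ ^ n)
  apply squeeze_zero' (t₀ := atTop)
  · filter_upwards [eventually_ge_atTop (1 : ℝ)] with x hx
    positivity
  · filter_upwards [eventually_ge_atTop (1 : ℝ)] with x hx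
    have hx0 : (0:ℝ) ≤ x := by linarith
    have hxa : x ≤ x ^ (a * n) := by
      calc x = x ^ (1:ℝ) := (Real.rpow_one x).symm
        _ ≤ x ^ (a * n) := Real.rpow_le_rpow_of_exponent_le hx hn
    have hpow : (x ^ a) ^ n = x ^ (a * n) := by
      rw [← Real.rpow_natCast (x ^ a) n, ← Real.rpow_mul hx0]
    have h1 : c⁻¹ ^ n * (c * x ^ a) ^ n = (x ^ a) ^ n := by
      rw [mul_pow, ← mul_assoc, ← mul_pow, inv_mul_cancel₀ hc.ne', one_pow, one_mul]
    calc x * Real.exp (-(c * x ^ a))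
        ≤ x ^ (a * n) * Real.exp (-(c * x ^ a)) :=
          mul_le_mul_of_nonneg_right hxa (Real.exp_nonneg _)
      _ = c⁻¹ ^ n * ((c * x ^ a) ^ n * Real.exp (-(c * x ^ a))) := by
          rw [← mul_assoc, h1, hpow]
  · exact hg'

lemma tendsto_nat_mul_exp_neg_rpow {c a : ℝ} (hc : 0 < c) (ha : 0 < a) :
    Tendsto (fun S : ℕ => (S : ℝ) * Real.exp (-(c * (S : ℝ) ^ a))) atTop (nhds 0) :=
  (tendsto_self_mul_exp_neg_rpow hc ha).comp tendsto_natCast_atTop_atTop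


set_option maxHeartbeats 2000000 in
/-- **High-probability spectral-norm bound.**  Under the model with
`R = ⌈S^ρ⌉`, `C = ⌈S^κ⌉`, `ρ + κ/2 < 1`, `κ + ρ/2 < 1`, and independent Bernoulli
entries with `S/(Υ'·RC) ≤ p_{ij} ≤ Υ·S/(RC)`, with probability tending to one
`‖Z‖₂ ≤ (Υ+1)·S/√(RC)`. -/
theorem l2OpNorm_whp_bound
    (ρ κ : ℝ) (hρ : ρ ∈ Set.Ioo (0 : ℝ) 1) (hκ : κ ∈ Set.Ioo (0 : ℝ) 1)
    (hcond1 : ρ + κ / 2 < 1) (hcond2 : κ + ρ / 2 < 1)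
    (Υ Υ' : ℝ) (hΥ : 1 ≤ Υ) (hΥ' : 1 ≤ Υ')
    (R C : ℕ → ℕ)
    (hR : ∀ S : ℕ, R S = ⌈(S : ℝ) ^ ρ⌉₊) (hC : ∀ S : ℕ, C S = ⌈(S : ℝ) ^ κ⌉₊)
    (p : ∀ S : ℕ, Fin (R S) → Fin (C S) → ℝ)
    (hp0 : ∀ S i j, p S i j ∈ Set.Icc (0 : ℝ) 1)
    (hp1 : ∀ S : ℕ, 1 ≤ S → ∀ i j, (S : ℝ) / (Υ' * (R S * C S)) ≤ p S i j)
    (hp2 : ∀ S : ℕ, 1 ≤ S → ∀ i j, p S i j ≤ Υ * S / (R S * C S))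
    (Ω : ℕ → Type) (mΩ : ∀ S, MeasurableSpace (Ω S))
    (P : ∀ S, Measure (Ω S)) (hP : ∀ S, IsProbabilityMeasure (P S))
    (Z : ∀ S : ℕ, Ω S → Matrix (Fin (R S)) (Fin (C S)) ℝ)
    (hZ01 : ∀ S ω i j, Z S ω i j = 0 ∨ Z S ω i j = 1)
    (hZmeas : ∀ S i j, Measurable (fun ω => Z S ω i j))
    (hZindep : ∀ S : ℕ, iIndepFun
      (fun (q : Fin (R S) × Fin (C S)) => fun ω => Z S ω q.1 q.2) (P S))
    (hZbern : ∀ S i j, P S {ω | Z S ω i j = 1} = ENNReal.ofReal (p S i j)) :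
    Tendsto (fun S : ℕ =>
        P S {ω | l2OpNorm (Z S ω) ≤ (Υ + 1) * S / Real.sqrt (R S * C S)})
      atTop (nhds 1) := by
  have hΥ0 : (0:ℝ) < Υ := lt_of_lt_of_le one_pos hΥ
  set t : ℝ := 1 / (2 * Υ) with ht_def
  have ht0 : 0 < t := by positivity
  have ht1 : t ≤ 1 := by
    rw [ht_def, div_le_one (by positivity)]; linarith
  -- the real error term
  set D : ℕ → ℝ := fun S => (R S : ℝ) * Real.exp (-((S:ℝ) / (4 * Υ * (R S : ℝ))))
      + (C S : ℝ) * Real.exp (-((S:ℝ) / (4 * Υ * (C S : ℝ)))) with hD_def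
  -- basic facts for S ≥ 1
  have hfacts : ∀ S : ℕ, 1 ≤ S →
      (1 ≤ (R S : ℝ) ∧ (R S : ℝ) ≤ 2 * (S:ℝ) ^ ρ) ∧
      (1 ≤ (C S : ℝ) ∧ (C S : ℝ) ≤ 2 * (S:ℝ) ^ κ) := by
    intro S hS
    have hS1 : (1:ℝ) ≤ (S:ℝ) := by exact_mod_cast hS
    have hS0 : (0:ℝ) < (S:ℝ) := lt_of_lt_of_le one_pos hS1
    have key : ∀ a : ℝ, 0 < a → a < 1 →
        1 ≤ ((⌈(S:ℝ) ^ a⌉₊ : ℕ) : ℝ) ∧ ((⌈(S:ℝ) ^ a⌉₊ : ℕ) : ℝ) ≤ 2 * (S:ℝ) ^ a := by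
      intro a ha0 ha1
      have hpow1 : (1:ℝ) ≤ (S:ℝ) ^ a := by
        calc (1:ℝ) = (S:ℝ) ^ (0:ℝ) := (Real.rpow_zero _).symm
          _ ≤ (S:ℝ) ^ a := Real.rpow_le_rpow_of_exponent_le hS1 ha0.le
      constructor
      · have : 1 ≤ ⌈(S:ℝ) ^ a⌉₊ := Nat.one_le_ceil_iff.mpr (by linarith)
        exact_mod_cast this
      · have h1 : ((⌈(S:ℝ) ^ a⌉₊ : ℕ) : ℝ) < (S:ℝ) ^ a + 1 :=
          Nat.ceil_lt_add_one (by linarith)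
        linarith
    exact ⟨by rw [hR S]; exact key ρ hρ.1 hρ.2, by rw [hC S]; exact key κ hκ.1 hκ.2⟩
  -- Step 1: lower bound on the probability for S ≥ 1
  have lower : ∀ S : ℕ, 1 ≤ S →
      1 - ENNReal.ofReal (D S) ≤
        P S {ω | l2OpNorm (Z S ω) ≤ (Υ + 1) * S / Real.sqrt (R S * C S)} := by
    intro S hS
    haveI := hP S
    obtain ⟨⟨hr1, _⟩, ⟨hc1, _⟩⟩ := hfacts S hS
    have hr0 : (0:ℝ) < (R S : ℝ) := lt_of_lt_of_le one_pos hr1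
    have hc0 : (0:ℝ) < (C S : ℝ) := lt_of_lt_of_le one_pos hc1
    have hS1 : (1:ℝ) ≤ (S:ℝ) := by exact_mod_cast hS
    have hS0 : (0:ℝ) < (S:ℝ) := lt_of_lt_of_le one_pos hS1
    set W : Fin (R S) × Fin (C S) → Ω S → ℝ := fun q ω => Z S ω q.1 q.2 with hW_def
    have hWmeas : ∀ q, Measurable (W q) := fun q => hZmeas S q.1 q.2
    have hW01 : ∀ q ω, W q ω = 0 ∨ W q ω = 1 := fun q ω => hZ01 S ω q.1 q.2
    have hpmean : ∀ q : Fin (R S) × Fin (C S),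
        (P S {ω | W q ω = 1}).toReal = p S q.1 q.2 := by
      intro q
      rw [hW_def]
      rw [hZbern S q.1 q.2, ENNReal.toReal_ofReal (hp0 S q.1 q.2).1]
    -- the exponent arithmetic
    have exp_arith : ∀ Sr : ℝ, 0 ≤ Sr →
        -t * ((Υ + 1) * Sr) + (Real.exp t - 1) * (Υ * Sr) ≤ -(Sr / (4 * Υ)) := by
      intro Sr hSr
      have he : Real.exp t ≤ 1 + t + t ^ 2 := exp_le_one_add_add_sq ht0.le ht1
      have h1 : (Real.exp t - 1) * (Υ * Sr) ≤ (t + t ^ 2) * (Υ * Sr) := by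
        apply mul_le_mul_of_nonneg_right (by linarith) (by positivity)
      have h2 : -t * ((Υ + 1) * Sr) + (t + t ^ 2) * (Υ * Sr) = -(Sr / (4 * Υ)) := by
        rw [ht_def]; field_simp; ring
      linarith
    -- row bad events
    set bR : ℝ := (Υ + 1) * ((S:ℝ) / (R S : ℝ)) with hbR_def
    set bC : ℝ := (Υ + 1) * ((S:ℝ) / (C S : ℝ)) with hbC_def
    set Abad : Fin (R S) → Set (Ω S) := fun i => {ω | bR ≤ ∑ j, Z S ω i j} with hA_def
    set Bbad : Fin (C S) → Set (Ω S) := fun j => {ω | bC ≤ ∑ i, Z S ω i j} with hB_def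
    have hAmeas : ∀ i, MeasurableSet (Abad i) := fun i =>
      measurableSet_le measurable_const (Finset.measurable_sum _ fun j _ => hZmeas S i j)
    have hBmeas : ∀ j, MeasurableSet (Bbad j) := fun j =>
      measurableSet_le measurable_const (Finset.measurable_sum _ fun i _ => hZmeas S i j)
    -- tail bound for rows
    have hrowtail : ∀ i, (P S (Abad i)).toReal
        ≤ Real.exp (-((S:ℝ) / ((R S : ℝ) * (4 * Υ)))) := by
      intro i
      have hsum_eq : ∀ ω, ∑ q ∈ ({i} ×ˢ Finset.univ : Finset (Fin (R S) × Fin (C S))), W q ω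
          = ∑ j, Z S ω i j := by
        intro ω
        rw [Finset.sum_product, Finset.sum_singleton]
      have hμ : ∑ q ∈ ({i} ×ˢ Finset.univ : Finset (Fin (R S) × Fin (C S))),
          (P S {ω | W q ω = 1}).toReal ≤ Υ * ((S:ℝ) / (R S : ℝ)) := by
        rw [Finset.sum_product, Finset.sum_singleton]
        calc ∑ j, (P S {ω | W (i, j) ω = 1}).toReal = ∑ j, p S i j := by
              exact Finset.sum_congr rfl fun j _ => hpmean (i, j)
          _ ≤ ∑ _j : Fin (C S), Υ * (S:ℝ) / ((R S : ℝ) * (C S : ℝ)) :=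
              Finset.sum_le_sum fun j _ => hp2 S hS i j
          _ = Υ * ((S:ℝ) / (R S : ℝ)) := by
              rw [Finset.sum_const, Finset.card_univ, Fintype.card_fin, nsmul_eq_mul]
              field_simp
      have := bernoulli_sum_tail (P S) ({i} ×ˢ Finset.univ) W hW01 hWmeas (hZindep S)
        hμ ht0.le bR
      have hAeq : Abad i = {ω | bR ≤ ∑ q ∈ ({i} ×ˢ Finset.univ :
          Finset (Fin (R S) × Fin (C S))), W q ω} := by
        rw [hA_def]
        ext ω
        simp only [Set.mem_setOf_eq, hsum_eq]
      rw [hAeq]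
      refine this.trans ?_
      apply Real.exp_le_exp.mpr
      have := exp_arith ((S:ℝ) / (R S : ℝ)) (by positivity)
      rw [hbR_def]
      calc -t * ((Υ + 1) * ((S:ℝ) / (R S : ℝ))) + (Real.exp t - 1) * (Υ * ((S:ℝ) / (R S : ℝ)))
          ≤ -(((S:ℝ) / (R S : ℝ)) / (4 * Υ)) := this
        _ = -((S:ℝ) / ((R S : ℝ) * (4 * Υ))) := by rw [div_div]
    -- tail bound for columns
    have hcoltail : ∀ j, (P S (Bbad j)).toReal
        ≤ Real.exp (-((S:ℝ) / ((C S : ℝ) * (4 * Υ)))) := by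
      intro j
      have hsum_eq : ∀ ω, ∑ q ∈ (Finset.univ ×ˢ {j} : Finset (Fin (R S) × Fin (C S))), W q ω
          = ∑ i, Z S ω i j := by
        intro ω
        rw [Finset.sum_product]
        exact Finset.sum_congr rfl fun i _ => Finset.sum_singleton _ _
      have hμ : ∑ q ∈ (Finset.univ ×ˢ {j} : Finset (Fin (R S) × Fin (C S))),
          (P S {ω | W q ω = 1}).toReal ≤ Υ * ((S:ℝ) / (C S : ℝ)) := by
        rw [Finset.sum_product]
        calc ∑ i, ∑ j' ∈ {j}, (P S {ω | W (i, j') ω = 1}).toReal = ∑ i, p S i j := by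
              refine Finset.sum_congr rfl fun i _ => ?_
              rw [Finset.sum_singleton, hpmean (i, j)]
          _ ≤ ∑ _i : Fin (R S), Υ * (S:ℝ) / ((R S : ℝ) * (C S : ℝ)) :=
              Finset.sum_le_sum fun i _ => hp2 S hS i j
          _ = Υ * ((S:ℝ) / (C S : ℝ)) := by
              rw [Finset.sum_const, Finset.card_univ, Fintype.card_fin, nsmul_eq_mul]
              field_simp
      have := bernoulli_sum_tail (P S) (Finset.univ ×ˢ {j}) W hW01 hWmeas (hZindep S)
        hμ ht0.le bC
      have hBeq : Bbad j = {ω | bC ≤ ∑ q ∈ (Finset.univ ×ˢ {j} :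
          Finset (Fin (R S) × Fin (C S))), W q ω} := by
        rw [hB_def]
        ext ω
        simp only [Set.mem_setOf_eq, hsum_eq]
      rw [hBeq]
      refine this.trans ?_
      apply Real.exp_le_exp.mpr
      have := exp_arith ((S:ℝ) / (C S : ℝ)) (by positivity)
      rw [hbC_def]
      calc -t * ((Υ + 1) * ((S:ℝ) / (C S : ℝ))) + (Real.exp t - 1) * (Υ * ((S:ℝ) / (C S : ℝ)))
          ≤ -(((S:ℝ) / (C S : ℝ)) / (4 * Υ)) := this
        _ = -((S:ℝ) / ((C S : ℝ) * (4 * Υ))) := by rw [div_div]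
    -- union bound
    set bad : Set (Ω S) := (⋃ i, Abad i) ∪ (⋃ j, Bbad j) with hbad_def
    have hbadmeas : MeasurableSet bad :=
      ((MeasurableSet.iUnion hAmeas).union (MeasurableSet.iUnion hBmeas))
    have hbadbound : P S bad ≤ ENNReal.ofReal (D S) := by
      have h1 : ∀ i, P S (Abad i) ≤ ENNReal.ofReal
          (Real.exp (-((S:ℝ) / ((R S : ℝ) * (4 * Υ))))) := fun i =>
        (ENNReal.le_ofReal_iff_toReal_le (measure_ne_top _ _) (Real.exp_nonneg _)).mpr
          (hrowtail i)
      have h2 : ∀ j, P S (Bbad j) ≤ ENNReal.ofReal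
          (Real.exp (-((S:ℝ) / ((C S : ℝ) * (4 * Υ))))) := fun j =>
        (ENNReal.le_ofReal_iff_toReal_le (measure_ne_top _ _) (Real.exp_nonneg _)).mpr
          (hcoltail j)
      calc P S bad ≤ P S (⋃ i, Abad i) + P S (⋃ j, Bbad j) := measure_union_le _ _
        _ ≤ (∑ i, P S (Abad i)) + ∑ j, P S (Bbad j) := by
            gcongr <;> exact measure_iUnion_fintype_le _ _
        _ ≤ (∑ _i : Fin (R S), ENNReal.ofReal
              (Real.exp (-((S:ℝ) / ((R S : ℝ) * (4 * Υ))))))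
            + ∑ _j : Fin (C S), ENNReal.ofReal
              (Real.exp (-((S:ℝ) / ((C S : ℝ) * (4 * Υ))))) := by
            gcongr with i _ j _
            exacts [h1 i, h2 j]
        _ = ENNReal.ofReal (D S) := by
            rw [Finset.sum_const, Finset.sum_const, Finset.card_univ, Finset.card_univ,
              Fintype.card_fin, Fintype.card_fin, hD_def]
            rw [ENNReal.ofReal_add (by positivity) (by positivity)]
            congr 1
            · rw [ENNReal.ofReal_mul (by positivity), nsmul_eq_mul,
                ENNReal.ofReal_natCast, mul_comm (4 * Υ) (R S : ℝ)]
            · rw [ENNReal.ofReal_mul (by positivity), nsmul_eq_mul,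
                ENNReal.ofReal_natCast, mul_comm (4 * Υ) (C S : ℝ)]
    -- inclusion: complement of bad ⊆ good event
    have hincl : badᶜ ⊆ {ω | l2OpNorm (Z S ω) ≤ (Υ + 1) * S / Real.sqrt (R S * C S)} := by
      intro ω hω
      simp only [hbad_def, Set.compl_union, Set.mem_inter_iff, Set.compl_iUnion,
        Set.mem_iInter, Set.mem_compl_iff, hA_def, hB_def, Set.mem_setOf_eq, not_le] at hω
      obtain ⟨hrow, hcol⟩ := hω
      have hZnn : ∀ i j, 0 ≤ Z S ω i j := fun i j => by
        rcases hZ01 S ω i j with h | h <;> simp [h]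
      have hbR0 : 0 ≤ bR := by rw [hbR_def]; positivity
      have hbC0 : 0 ≤ bC := by rw [hbC_def]; positivity
      have := l2OpNorm_le_sqrt_mul (Z S ω) (hZnn) hbR0 hbC0
        (fun i => (hrow i).le) (fun j => (hcol j).le)
      refine this.trans_eq ?_
      have hsq : bR * bC = ((Υ + 1) * S / Real.sqrt ((R S : ℝ) * (C S : ℝ))) ^ 2 := by
        rw [hbR_def, hbC_def, div_pow, Real.sq_sqrt (by positivity)]
        field_simp
      rw [hsq, Real.sqrt_sq (by positivity)]
    have hcompl : 1 - ENNReal.ofReal (D S) ≤ P S badᶜ := by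
      rw [prob_compl_eq_one_sub hbadmeas]
      exact tsub_le_tsub_left hbadbound 1
    exact hcompl.trans (measure_mono hincl)
  -- Step 2: the error term tends to zero
  have hD0 : Tendsto (fun S => ENNReal.ofReal (D S)) atTop (nhds 0) := by
    have hdecay1 := tendsto_nat_mul_exp_neg_rpow (c := 1 / (8 * Υ)) (a := 1 - ρ)
      (by positivity) (by linarith [hρ.2])
    have hdecay2 := tendsto_nat_mul_exp_neg_rpow (c := 1 / (8 * Υ)) (a := 1 - κ)
      (by positivity) (by linarith [hκ.2])
    have hG : Tendsto (fun S : ℕ =>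
        2 * ((S:ℝ) * Real.exp (-(1 / (8 * Υ) * (S:ℝ) ^ (1 - ρ))))
        + 2 * ((S:ℝ) * Real.exp (-(1 / (8 * Υ) * (S:ℝ) ^ (1 - κ))))) atTop (nhds 0) := by
      have := (hdecay1.const_mul 2).add (hdecay2.const_mul 2)
      simpa using this
    have hDreal : Tendsto D atTop (nhds 0) := by
      refine squeeze_zero' (t₀ := atTop) ?_ ?_ hG
      · filter_upwards [eventually_ge_atTop 1] with S hS
        rw [hD_def]
        positivity
      · filter_upwards [eventually_ge_atTop 1] with S hS
        obtain ⟨⟨hr1, hr2⟩, ⟨hc1, hc2⟩⟩ := hfacts S hS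
        have hS1 : (1:ℝ) ≤ (S:ℝ) := by exact_mod_cast hS
        have hS0 : (0:ℝ) < (S:ℝ) := lt_of_lt_of_le one_pos hS1
        have hr0 : (0:ℝ) < (R S : ℝ) := lt_of_lt_of_le one_pos hr1
        have hc0 : (0:ℝ) < (C S : ℝ) := lt_of_lt_of_le one_pos hc1
        rw [hD_def]
        have bound : ∀ (n : ℕ) (a : ℝ), 0 < a → a < 1 → 1 ≤ (n:ℝ) →
            (n:ℝ) ≤ 2 * (S:ℝ) ^ a →
            (n:ℝ) * Real.exp (-((S:ℝ) / (4 * Υ * (n:ℝ))))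
              ≤ 2 * ((S:ℝ) * Real.exp (-(1 / (8 * Υ) * (S:ℝ) ^ (1 - a)))) := by
          intro n a ha0 ha1 hn1 hn2
          have hn0 : (0:ℝ) < (n:ℝ) := lt_of_lt_of_le one_pos hn1
          have hpa : (0:ℝ) < (S:ℝ) ^ a := Real.rpow_pos_of_pos hS0 a
          have hnS : (n:ℝ) ≤ 2 * (S:ℝ) := by
            refine hn2.trans ?_
            have : (S:ℝ) ^ a ≤ (S:ℝ) := by
              calc (S:ℝ) ^ a ≤ (S:ℝ) ^ (1:ℝ) :=
                    Real.rpow_le_rpow_of_exponent_le hS1 ha1.le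
                _ = (S:ℝ) := Real.rpow_one _
            linarith
          have hexp : -((S:ℝ) / (4 * Υ * (n:ℝ))) ≤ -(1 / (8 * Υ) * (S:ℝ) ^ (1 - a)) := by
            rw [neg_le_neg_iff]
            have h1 : 1 / (8 * Υ) * (S:ℝ) ^ (1 - a) = (S:ℝ) / (4 * Υ * (2 * (S:ℝ) ^ a)) := by
              rw [Real.rpow_sub hS0, Real.rpow_one, one_div_mul_eq_div, div_div,
                div_eq_div_iff (by positivity) (by positivity)]
              ring
            rw [h1]
            apply div_le_div_of_nonneg_left hS0.le (by positivity)
            calc 4 * Υ * (n:ℝ) ≤ 4 * Υ * (2 * (S:ℝ) ^ a) := by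
                  apply mul_le_mul_of_nonneg_left hn2 (by positivity)
              _ = 4 * Υ * (2 * (S:ℝ) ^ a) := rfl
          calc (n:ℝ) * Real.exp (-((S:ℝ) / (4 * Υ * (n:ℝ))))
              ≤ (2 * (S:ℝ)) * Real.exp (-(1 / (8 * Υ) * (S:ℝ) ^ (1 - a))) := by
                apply mul_le_mul hnS (Real.exp_le_exp.mpr hexp) (Real.exp_nonneg _)
                  (by positivity)
            _ = 2 * ((S:ℝ) * Real.exp (-(1 / (8 * Υ) * (S:ℝ) ^ (1 - a)))) := by ring
        have b1 := bound (R S) ρ hρ.1 hρ.2 hr1 hr2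
        have b2 := bound (C S) κ hκ.1 hκ.2 hc1 hc2
        linarith
    have := ENNReal.tendsto_ofReal hDreal
    simpa using this
  -- Step 3: squeeze
  have hlow : Tendsto (fun S => 1 - ENNReal.ofReal (D S)) atTop (nhds 1) := by
    have := ENNReal.Tendsto.sub (tendsto_const_nhds (x := (1:ENNReal)) (f := atTop)) hD0
      (Or.inr ENNReal.zero_ne_top)
    simpa using this
  refine tendsto_of_tendsto_of_tendsto_of_le_of_le' hlow tendsto_const_nhds ?_ ?_
  · filter_upwards [eventually_ge_atTop 1] with S hS
    exact lower S hS
  · filter_upwards with S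
    haveI := hP S
    exact prob_le_one
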